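/- Let B be a V-category superposed upon a V-category A, with composition ∘, units j_A : I → B(A,A), and mixed action morphisms •. Then there is an identity-on-objects V-functor S : A → B whose hom-morphisms S_{AB} : A(A,B) → B(A,B) are the composites •_{(AA)B} ∘ (j_A ⊗ 1) ∘ ℓ^{-1}, and these equal •_{A(BB)} ∘ (1 ⊗ j_B) ∘ r^{-1}. -/

import Mathlib

universe w v u u₁

open CategoryTheory MonoidalCategory

namespace Paper

variable (V : Type u) [Category.{v} V] [MonoidalCategory V]
variable {C : Type u₁} [EnrichedCategory V C]

/-- A `V`-category `B` superposed upon a `V`-category `A` (here the carrier of `A`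
is `C`): hom-objects `BHom`, composition `comp'` and units `j` making the objects
of `A` into a `V`-category, together with the mixed action morphisms
`actL = •_{A(BC)}` and `actR = •_{(AB)C}` encoding the `V`-functoriality of
`B(-,-) : A^op ⊗ A → V̲` and the extraordinary `V`-naturality of `comp'` and `j`. -/
structure Superposed where
  BHom : C → C → V
  j : ∀ A : C, 𝟙_ V ⟶ BHom A A
  comp' : ∀ A B C' : C, BHom A B ⊗ BHom B C' ⟶ BHom A C'
  actL : ∀ A B C' : C, (A ⟶[V] B) ⊗ BHom B C' ⟶ BHom A C'
  actR : ∀ A B C' : C, BHom A B ⊗ (B ⟶[V] C') ⟶ BHom A C'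
  -- `B` is a `V`-category
  id_comp : ∀ A B : C,
    (λ_ (BHom A B)).inv ≫ j A ▷ _ ≫ comp' A A B = 𝟙 (BHom A B)
  comp_id : ∀ A B : C,
    (ρ_ (BHom A B)).inv ≫ _ ◁ j B ≫ comp' A B B = 𝟙 (BHom A B)
  assoc : ∀ A B C' D : C,
    (α_ _ _ _).inv ≫ comp' A B C' ▷ _ ≫ comp' A C' D =
      _ ◁ comp' B C' D ≫ comp' A B D
  -- the actions are unital and associative over composition in `A`
  actL_id : ∀ A B : C,
    (λ_ (BHom A B)).inv ≫ eId V A ▷ _ ≫ actL A A B = 𝟙 (BHom A B)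
  actL_comp : ∀ A A' A'' B : C,
    (α_ _ _ _).inv ≫ eComp V A A' A'' ▷ _ ≫ actL A A'' B =
      _ ◁ actL A' A'' B ≫ actL A A' B
  actR_id : ∀ A B : C,
    (ρ_ (BHom A B)).inv ≫ _ ◁ eId V B ≫ actR A B B = 𝟙 (BHom A B)
  actR_comp : ∀ A B B' B'' : C,
    (α_ _ _ _).inv ≫ actR A B B' ▷ _ ≫ actR A B' B'' =
      _ ◁ eComp V B B' B'' ≫ actR A B B''
  -- the two actions commute, and are compatible with composition in `B`
  actL_actR : ∀ A A' B B' : C,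
    _ ◁ actR A' B B' ≫ actL A A' B' =
      (α_ ((A ⟶[V] A')) (BHom A' B) ((B ⟶[V] B'))).inv ≫
        actL A A' B ▷ _ ≫ actR A B B'
  actL_comp' : ∀ A A' B C' : C,
    _ ◁ comp' A' B C' ≫ actL A A' C' =
      (α_ ((A ⟶[V] A')) (BHom A' B) (BHom B C')).inv ≫
        actL A A' B ▷ _ ≫ comp' A B C'
  actR_comp' : ∀ A B C' C'' : C,
    _ ◁ actR B C' C'' ≫ comp' A B C'' =
      (α_ (BHom A B) (BHom B C') ((C' ⟶[V] C''))).inv ≫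
        comp' A B C' ▷ _ ≫ actR A C' C''
  -- extraordinary `V`-naturality of `j`
  j_extranatural : ∀ A B : C,
    (λ_ ((A ⟶[V] B))).inv ≫ j A ▷ _ ≫ actR A A B =
      (ρ_ ((A ⟶[V] B))).inv ≫ _ ◁ j B ≫ actL A B B

variable {V}

/-- The hom-morphisms of the induced identity-on-objects `V`-functor `S : A → B`. -/
def supS (S : Superposed V (C := C)) (A B : C) : (A ⟶[V] B) ⟶ S.BHom A B :=
  (λ_ ((A ⟶[V] B))).inv ≫ S.j A ▷ _ ≫ S.actR A A B

end Paper

open Paper MonoidalCategory CategoryTheory in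
private lemma eId_supS
    {V : Type u} [Category.{v} V] [MonoidalCategory V]
    {C : Type u₁} [EnrichedCategory V C] (S : Superposed V (C := C)) (A : C) :
    eId V A ≫ supS S A A = S.j A := by
  have h : eId V A ≫ supS S A A =
      S.j A ≫ (ρ_ (S.BHom A A)).inv ≫ _ ◁ eId V A ≫ S.actR A A A := by
    rw [supS]
    rw [← Category.assoc (eId V A), leftUnitor_inv_naturality]
    rw [Category.assoc, ← Category.assoc (𝟙_ V ◁ eId V A), whisker_exchange]
    simp only [Category.assoc]
    rw [unitors_inv_equal, ← rightUnitor_inv_naturality_assoc]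
  rw [h, S.actR_id]
  simp

open Paper MonoidalCategory CategoryTheory in
private lemma eComp_supS
    {V : Type u} [Category.{v} V] [MonoidalCategory V]
    {C : Type u₁} [EnrichedCategory V C] (S : Superposed V (C := C)) (A B C' : C) :
    eComp V A B C' ≫ supS S A C' =
      supS S A B ▷ (B ⟶[V] C') ≫ S.actR A B C' := by
  rw [supS, supS]
  rw [← Category.assoc (eComp V A B C'), leftUnitor_inv_naturality]
  rw [Category.assoc, ← Category.assoc (𝟙_ V ◁ eComp V A B C'), whisker_exchange]
  rw [Category.assoc, ← S.actR_comp]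
  rw [leftUnitor_tensor_inv]
  simp only [Category.assoc]
  rw [← associator_naturality_left_assoc]
  simp [comp_whiskerRight]

open Paper MonoidalCategory CategoryTheory in
private lemma whiskerLeft_supS_comp'
    {V : Type u} [Category.{v} V] [MonoidalCategory V]
    {C : Type u₁} [EnrichedCategory V C] (S : Superposed V (C := C)) (A B C' : C) :
    S.BHom A B ◁ supS S B C' ≫ S.comp' A B C' = S.actR A B C' := by
  rw [supS]
  simp only [MonoidalCategory.whiskerLeft_comp, Category.assoc]
  rw [S.actR_comp' A B B C']
  rw [associator_inv_naturality_middle_assoc]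
  have htri : S.BHom A B ◁ (λ_ ((B ⟶[V] C'))).inv ≫
      (α_ (S.BHom A B) (𝟙_ V) ((B ⟶[V] C'))).inv =
      (ρ_ (S.BHom A B)).inv ▷ (B ⟶[V] C') := by
    coherence
  rw [reassoc_of% htri]
  rw [← comp_whiskerRight_assoc, ← comp_whiskerRight_assoc, Category.assoc, S.comp_id]
  simp

open Paper MonoidalCategory CategoryTheory in
/-- Let `B` be a `V`-category superposed upon a `V`-category `A`.
Then there is an identity-on-objects `V`-functor `S : A → B` whose hom-morphisms
are the composites `•_{(AA)B} ∘ (j_A ⊗ 1) ∘ ℓ⁻¹`, and these equal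
`•_{A(BB)} ∘ (1 ⊗ j_B) ∘ r⁻¹`; `S` preserves identities and composition. -/
theorem superposed_induces_enriched_functor
    (V : Type u) [Category.{v} V] [MonoidalCategory V]
    (C : Type u₁) [EnrichedCategory V C] (S : Superposed V (C := C)) :
    -- the two descriptions of `S` agree
    (∀ A B : C,
      supS S A B =
        (ρ_ ((A ⟶[V] B))).inv ≫ _ ◁ S.j B ≫ S.actL A B B) ∧
    -- `S` is an (identity-on-objects) `V`-functor: it preserves identities
    (∀ A : C, eId V A ≫ supS S A A = S.j A) ∧
    -- and composition
    (∀ A B C' : C,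
      eComp V A B C' ≫ supS S A C' =
        (supS S A B ⊗ₘ supS S B C') ≫ S.comp' A B C') := by
  refine ⟨fun A B => S.j_extranatural A B, fun A => eId_supS S A, fun A B C' => ?_⟩
  rw [eComp_supS, MonoidalCategory.tensorHom_def, Category.assoc, whiskerLeft_supS_comp']
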